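/- Let all features be binary and let Ω be the uniform product distribution on {0,1}^n (each feature is 1 independently with probability 1/2). Let L : {0,1}^n → {0,1} be monotone with L(1,…,1) = 1, and let e⋆ = (1,…,1). Then P(L = 1) = 1 − Σ_{i=1}^n SHAP(e⋆, F_i); equivalently, the number of satisfying assignments of L equals 2^n·(1 − Σ_i SHAP(e⋆, F_i)). -/

import Mathlib

open Finset

/-- Conditional expectation of `L` given agreement with `eStar` on the features in `S`,
with respect to the probability mass function `w` on entities in `{0,1}^n`. -/
noncomputable def condExp (n : ℕ) (w L : (Fin n → Bool) → ℝ) (eStar : Fin n → Bool)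
    (S : Finset (Fin n)) : ℝ :=
  (∑ e ∈ univ.filter (fun e => ∀ i ∈ S, e i = eStar i), w e * L e) /
  (∑ e ∈ univ.filter (fun e => ∀ i ∈ S, e i = eStar i), w e)

/-- The contribution `c(e⋆, F_i, π)` of feature `i` under the permutation `π`. -/
noncomputable def contrib (n : ℕ) (w L : (Fin n → Bool) → ℝ) (eStar : Fin n → Bool)
    (i : Fin n) (π : Equiv.Perm (Fin n)) : ℝ :=
  condExp n w L eStar (univ.filter fun j => π j ≤ π i) -
  condExp n w L eStar (univ.filter fun j => π j < π i)

/-- The SHAP score of feature `i`: the average contribution over all permutations. -/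
noncomputable def shap (n : ℕ) (w L : (Fin n → Bool) → ℝ) (eStar : Fin n → Bool)
    (i : Fin n) : ℝ :=
  (Nat.factorial n : ℝ)⁻¹ * ∑ π : Equiv.Perm (Fin n), contrib n w L eStar i π

/-- Over the uniform product distribution on `{0,1}^n`, for a monotone `{0,1}`-valued
classifier `L` with `L(1,…,1) = 1` and `e⋆ = (1,…,1)`:
`P(L = 1) = 1 − Σ_i SHAP(e⋆, F_i)`; equivalently, the number of satisfying assignments of
`L` equals `2^n·(1 − Σ_i SHAP(e⋆, F_i))`. -/
theorem prob_eq_one_sub_sum_shap (n : ℕ) (L : (Fin n → Bool) → ℝ)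
    (hL01 : ∀ e, L e = 0 ∨ L e = 1)
    (hmono : ∀ e e' : Fin n → Bool, (∀ i, e i ≤ e' i) → L e ≤ L e')
    (hLtop : L (fun _ => true) = 1) :
    ((univ.filter (fun e : Fin n → Bool => L e = 1)).card : ℝ) / 2 ^ n =
        1 - ∑ i, shap n (fun _ => ((2 : ℝ) ^ n)⁻¹) L (fun _ => true) i ∧
      ((univ.filter (fun e : Fin n → Bool => L e = 1)).card : ℝ) =
        2 ^ n * (1 - ∑ i, shap n (fun _ => ((2 : ℝ) ^ n)⁻¹) L (fun _ => true) i) := by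
  classical
  set w : (Fin n → Bool) → ℝ := fun _ => ((2 : ℝ) ^ n)⁻¹ with hw
  set eStar : Fin n → Bool := fun _ => true with hes
  have h2 : (2 : ℝ) ^ n ≠ 0 := by positivity
  set A : ℝ := ((univ.filter (fun e : Fin n → Bool => L e = 1)).card : ℝ) / 2 ^ n with hAdef
  -- condExp on the empty feature set equals A
  have hsumL : ∑ e : Fin n → Bool, L e
      = ((univ.filter (fun e : Fin n → Bool => L e = 1)).card : ℝ) := by
    rw [← Finset.sum_boole]
    refine Finset.sum_congr rfl fun e _ => ?_
    rcases hL01 e with h | h <;> simp [h]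
  have hA : condExp n w L eStar (∅ : Finset (Fin n)) = A := by
    unfold condExp
    have hfil : univ.filter (fun e : Fin n → Bool => ∀ i ∈ (∅ : Finset (Fin n)), e i = eStar i)
        = univ := by simp
    rw [hfil]
    have hden : ∑ _e : Fin n → Bool, ((2 : ℝ) ^ n)⁻¹ = 1 := by
      rw [Finset.sum_const, Finset.card_univ, Fintype.card_fun, Fintype.card_bool,
        Fintype.card_fin, nsmul_eq_mul]
      push_cast
      exact mul_inv_cancel₀ h2
    have hnum : ∑ e : Fin n → Bool, ((2 : ℝ) ^ n)⁻¹ * L e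
        = ((univ.filter (fun e : Fin n → Bool => L e = 1)).card : ℝ) / 2 ^ n := by
      rw [← Finset.mul_sum, hsumL]
      ring
    simp only [hw]
    rw [hnum, hden, div_one, hAdef]
  -- condExp on the full feature set equals 1
  have h1 : condExp n w L eStar (univ : Finset (Fin n)) = 1 := by
    unfold condExp
    have hfil : univ.filter (fun e : Fin n → Bool => ∀ i ∈ (univ : Finset (Fin n)), e i = eStar i)
        = {fun _ => true} := by
      ext e
      simp [funext_iff, hes]
    rw [hfil]
    simp [hLtop, hw, h2]
    rw [show (L fun _ => true) = 1 from hLtop]; simp [h2]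
  -- telescoping over each permutation
  have hπ : ∀ π : Equiv.Perm (Fin n), ∑ i, contrib n w L eStar i π = 1 - A := by
    intro π
    set F : ℕ → ℝ := fun m => condExp n w L eStar (univ.filter fun j => (π j : ℕ) < m) with hF
    have hci : ∀ i, contrib n w L eStar i π = F ((π i : ℕ) + 1) - F (π i : ℕ) := by
      intro i
      unfold contrib
      have e1 : (univ.filter fun j => π j ≤ π i)
          = univ.filter fun j => (π j : ℕ) < (π i : ℕ) + 1 := by
        ext j
        simp only [Finset.mem_filter, Finset.mem_univ, true_and, Fin.le_def, Nat.lt_succ_iff]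
      have e2 : (univ.filter fun j => π j < π i)
          = univ.filter fun j => (π j : ℕ) < (π i : ℕ) := by
        ext j
        simp only [Finset.mem_filter, Finset.mem_univ, true_and, Fin.lt_def]
      rw [e1, e2]
    have hFn : F n = 1 := by
      have h : (univ.filter fun j => (π j : ℕ) < n) = univ :=
        Finset.filter_true_of_mem fun j _ => (π j).is_lt
      show condExp n w L eStar (univ.filter fun j => (π j : ℕ) < n) = 1
      rw [h]; exact h1
    have hF0 : F 0 = A := by
      have h : (univ.filter fun j : Fin n => (π j : ℕ) < 0) = ∅ := by simp
      show condExp n w L eStar (univ.filter fun j : Fin n => (π j : ℕ) < 0) = A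
      rw [h]; exact hA
    calc ∑ i, contrib n w L eStar i π
        = ∑ i, (F ((π i : ℕ) + 1) - F (π i : ℕ)) := Finset.sum_congr rfl fun i _ => hci i
      _ = ∑ k : Fin n, (F ((k : ℕ) + 1) - F (k : ℕ)) :=
          Equiv.sum_comp π (fun k : Fin n => F ((k : ℕ) + 1) - F (k : ℕ))
      _ = ∑ m ∈ Finset.range n, (F (m + 1) - F m) :=
          Fin.sum_univ_eq_sum_range (fun m => F (m + 1) - F m) n
      _ = F n - F 0 := Finset.sum_range_sub F n
      _ = 1 - A := by rw [hFn, hF0]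
  have hfact : (Nat.factorial n : ℝ) ≠ 0 := by positivity
  have hsum : ∑ i, shap n w L eStar i = 1 - A := by
    unfold shap
    rw [← Finset.mul_sum, Finset.sum_comm]
    have : ∑ π : Equiv.Perm (Fin n), ∑ i, contrib n w L eStar i π
        = (Nat.factorial n : ℝ) * (1 - A) := by
      rw [Finset.sum_congr rfl fun π _ => hπ π, Finset.sum_const, Finset.card_univ, Fintype.card_perm,
        Fintype.card_fin, nsmul_eq_mul]
    rw [this, ← mul_assoc, inv_mul_cancel₀ hfact, one_mul]
  constructor
  · rw [hsum]; ring
  · rw [hsum, hAdef]; field_simp; ring
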